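/- Let γ > 0. The map Ψ defined by Ψ((X,Y,Â,B̂,Ĉ,D̂), Π) := (X,Y,Â,B̂,Ĉ,D̂, Π, (I − YX)Π⁻¹) is a continuous bijection from F_γ × GL_{n_x}(ℝ) onto G_γ, where GL_{n_x}(ℝ) is the set of invertible real n_x×n_x matrices. -/

import Mathlib

open Matrix

noncomputable section

/-- Operator norm (largest singular value) of a complex matrix. -/
def matOpNorm {m n : ℕ} (M : Matrix (Fin m) (Fin n) ℂ) : ℝ :=
  ‖(Matrix.toEuclideanLin M).toContinuousLinearMap‖

/-- A real square matrix is Hurwitz if all its eigenvalues (over ℂ) have negative real part. -/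
def IsHurwitz {n : Type*} [Fintype n] [DecidableEq n] (M : Matrix n n ℝ) : Prop :=
  ∀ μ ∈ spectrum ℂ (M.map (Complex.ofReal ·)), μ.re < 0

/-- The plant data. -/
structure Plant (nx nu ny nw nz : ℕ) where
  A : Matrix (Fin nx) (Fin nx) ℝ
  B1 : Matrix (Fin nx) (Fin nw) ℝ
  B2 : Matrix (Fin nx) (Fin nu) ℝ
  C1 : Matrix (Fin nz) (Fin nx) ℝ
  C2 : Matrix (Fin ny) (Fin nx) ℝ
  D11 : Matrix (Fin nz) (Fin nw) ℝ
  D12 : Matrix (Fin nz) (Fin nu) ℝ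
  D21 : Matrix (Fin ny) (Fin nw) ℝ

namespace Plant

variable {nx nu ny nw nz : ℕ} (P : Plant nx nu ny nw nz)

/-- Closed-loop `A` matrix. -/
def Acl (K : Matrix (Fin nu ⊕ Fin nx) (Fin ny ⊕ Fin nx) ℝ) :
    Matrix (Fin nx ⊕ Fin nx) (Fin nx ⊕ Fin nx) ℝ :=
  fromBlocks (P.A + P.B2 * K.toBlocks₁₁ * P.C2) (P.B2 * K.toBlocks₁₂)
    (K.toBlocks₂₁ * P.C2) K.toBlocks₂₂

/-- Closed-loop `B` matrix. -/
def Bcl (K : Matrix (Fin nu ⊕ Fin nx) (Fin ny ⊕ Fin nx) ℝ) :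
    Matrix (Fin nx ⊕ Fin nx) (Fin nw) ℝ :=
  fromRows (P.B1 + P.B2 * K.toBlocks₁₁ * P.D21) (K.toBlocks₂₁ * P.D21)

/-- Closed-loop `C` matrix. -/
def Ccl (K : Matrix (Fin nu ⊕ Fin nx) (Fin ny ⊕ Fin nx) ℝ) :
    Matrix (Fin nz) (Fin nx ⊕ Fin nx) ℝ :=
  fromCols (P.C1 + P.D12 * K.toBlocks₁₁ * P.C2) (P.D12 * K.toBlocks₁₂)

/-- Closed-loop `D` matrix. -/
def Dcl (K : Matrix (Fin nu ⊕ Fin nx) (Fin ny ⊕ Fin nx) ℝ) :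
    Matrix (Fin nz) (Fin nw) ℝ :=
  P.D11 + P.D12 * K.toBlocks₁₁ * P.D21

/-- The set of stabilizing full-order dynamic output feedback controllers. -/
def Cstab : Set (Matrix (Fin nu ⊕ Fin nx) (Fin ny ⊕ Fin nx) ℝ) :=
  {K | IsHurwitz (P.Acl K)}

/-- Closed-loop transfer matrix at frequency `s = iω`. -/
def transferAt (K : Matrix (Fin nu ⊕ Fin nx) (Fin ny ⊕ Fin nx) ℝ) (ω : ℝ) :
    Matrix (Fin nz) (Fin nw) ℂ :=
  (P.Ccl K).map (Complex.ofReal ·) *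
    (((Complex.I * (ω : ℂ)) • (1 : Matrix (Fin nx ⊕ Fin nx) (Fin nx ⊕ Fin nx) ℂ)
        - (P.Acl K).map (Complex.ofReal ·))⁻¹) *
    (P.Bcl K).map (Complex.ofReal ·) + (P.Dcl K).map (Complex.ofReal ·)

/-- Closed-loop H∞ norm. -/
def hinfNorm (K : Matrix (Fin nu ⊕ Fin nx) (Fin ny ⊕ Fin nx) ℝ) : ℝ :=
  ⨆ ω : ℝ, matOpNorm (P.transferAt K ω)

/-- The feasible set `K_γ`. -/
def Kset (γ : ℝ) : Set (Matrix (Fin nu ⊕ Fin nx) (Fin ny ⊕ Fin nx) ℝ) :=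
  {K | K ∈ P.Cstab ∧ P.hinfNorm K < γ}

end Plant

/-- The similarity transformation `𝒯_T` on full-order controllers. -/
def simT {nx nu ny : ℕ} (T : Matrix (Fin nx) (Fin nx) ℝ)
    (K : Matrix (Fin nu ⊕ Fin nx) (Fin ny ⊕ Fin nx) ℝ) :
    Matrix (Fin nu ⊕ Fin nx) (Fin ny ⊕ Fin nx) ℝ :=
  fromBlocks K.toBlocks₁₁ (K.toBlocks₁₂ * T⁻¹) (T * K.toBlocks₂₁) (T * K.toBlocks₂₂ * T⁻¹)

/-- The symmetric block matrix `M_γ(X, Y, Â, B̂, Ĉ, D̂)` from the change of variables in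
`H∞` synthesis. -/
def Mγmat {nx nu ny nw nz : ℕ} (P : Plant nx nu ny nw nz) (γ : ℝ)
    (X Y Ah : Matrix (Fin nx) (Fin nx) ℝ) (Bh : Matrix (Fin nx) (Fin ny) ℝ)
    (Ch : Matrix (Fin nu) (Fin nx) ℝ) (Dh : Matrix (Fin nu) (Fin ny) ℝ) :
    Matrix ((Fin nx ⊕ Fin nx) ⊕ (Fin nw ⊕ Fin nz)) ((Fin nx ⊕ Fin nx) ⊕ (Fin nw ⊕ Fin nz)) ℝ :=
  let M11 := P.A * X + X * P.Aᵀ + P.B2 * Ch + (P.B2 * Ch)ᵀ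
  let M12 := Ahᵀ + (P.A + P.B2 * Dh * P.C2)
  let M13 := P.B1 + P.B2 * Dh * P.D21
  let M14 := (P.C1 * X + P.D12 * Ch)ᵀ
  let M22 := P.Aᵀ * Y + Y * P.A + Bh * P.C2 + (Bh * P.C2)ᵀ
  let M23 := Y * P.B1 + Bh * P.D21
  let M24 := (P.C1 + P.D12 * Dh * P.C2)ᵀ
  let M34 := (P.D11 + P.D12 * Dh * P.D21)ᵀ
  fromBlocks (fromBlocks M11 M12 M12ᵀ M22) (fromBlocks M13 M14 M23 M24)
    (fromBlocks M13ᵀ M23ᵀ M14ᵀ M24ᵀ)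
    (fromBlocks ((-γ) • (1 : Matrix (Fin nw) (Fin nw) ℝ)) M34 M34ᵀ
      ((-γ) • (1 : Matrix (Fin nz) (Fin nz) ℝ)))

/-- The tuple `(X, Y, Â, B̂, Ĉ, D̂)` of decision variables of the LMI. -/
abbrev FTuple (nx nu ny : ℕ) : Type :=
  Matrix (Fin nx) (Fin nx) ℝ × Matrix (Fin nx) (Fin nx) ℝ × Matrix (Fin nx) (Fin nx) ℝ ×
    Matrix (Fin nx) (Fin ny) ℝ × Matrix (Fin nu) (Fin nx) ℝ × Matrix (Fin nu) (Fin ny) ℝ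

/-- The tuple `(X, Y, Â, B̂, Ĉ, D̂, Π, Ξ)`. -/
abbrev GTuple (nx nu ny : ℕ) : Type :=
  FTuple nx nu ny × Matrix (Fin nx) (Fin nx) ℝ × Matrix (Fin nx) (Fin nx) ℝ

/-- The convex set `F_γ`: tuples `(X, Y, Â, B̂, Ĉ, D̂)` with `X, Y` symmetric,
`[[X, I],[I, Y]] ≻ 0` and `M_γ(X,Y,Â,B̂,Ĉ,D̂) ≺ 0`. -/
def Fset {nx nu ny nw nz : ℕ} (P : Plant nx nu ny nw nz) (γ : ℝ) : Set (FTuple nx nu ny) :=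
  {W | W.1.IsSymm ∧ W.2.1.IsSymm ∧
    (fromBlocks W.1 (1 : Matrix (Fin nx) (Fin nx) ℝ) 1 W.2.1).PosDef ∧
    (-(Mγmat P γ W.1 W.2.1 W.2.2.1 W.2.2.2.1 W.2.2.2.2.1 W.2.2.2.2.2)).PosDef}

/-- The set `G_γ`: tuples `(X, Y, Â, B̂, Ĉ, D̂, Π, Ξ)` with `(X,…,D̂) ∈ F_γ` and
`Ξ·Π = I − YX`. -/
def Gset {nx nu ny nw nz : ℕ} (P : Plant nx nu ny nw nz) (γ : ℝ) : Set (GTuple nx nu ny) :=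
  {Z | Z.1 ∈ Fset P γ ∧ Z.2.2 * Z.2.1 = 1 - Z.1.2.1 * Z.1.1}

/-- The controller-reconstruction map `Φ`. -/
def Phi {nx nu ny nw nz : ℕ} (P : Plant nx nu ny nw nz) (Z : GTuple nx nu ny) :
    Matrix (Fin nu ⊕ Fin nx) (Fin ny ⊕ Fin nx) ℝ :=
  match Z with
  | ((X, Y, Ah, Bh, Ch, Dh), Pm, Ξ) =>
    (fromBlocks (1 : Matrix (Fin nu) (Fin nu) ℝ) 0 (Y * P.B2) Ξ)⁻¹ *
      fromBlocks Dh Ch Bh (Ah - Y * P.A * X) *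
      (fromBlocks (1 : Matrix (Fin ny) (Fin ny) ℝ) (P.C2 * X) 0 Pm)⁻¹

/-- The map `Ψ((X,Y,Â,B̂,Ĉ,D̂), Π) = (X,Y,Â,B̂,Ĉ,D̂, Π, (I − YX)Π⁻¹)`. -/
def Psi {nx nu ny : ℕ} (p : FTuple nx nu ny × Matrix (Fin nx) (Fin nx) ℝ) :
    GTuple nx nu ny :=
  (p.1, p.2, (1 - p.1.2.1 * p.1.1) * p.2⁻¹)


private lemma blockPosDef_X' {n : ℕ} {X Y : Matrix (Fin n) (Fin n) ℝ}
    (h : (fromBlocks X (1 : Matrix (Fin n) (Fin n) ℝ) 1 Y).PosDef) : X.PosDef := by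
  rw [posDef_iff_dotProduct_mulVec]
  constructor
  · have h1 := h.1
    rw [Matrix.IsHermitian, fromBlocks_conjTranspose] at h1
    have := congrArg Matrix.toBlocks₁₁ h1
    simpa [toBlocks_fromBlocks₁₁, Matrix.IsSymm] using this
  · intro x hx
    have := h.dotProduct_mulVec_pos (x := Sum.elim x 0) (by
      intro hc
      apply hx
      funext i
      exact congrFun hc (Sum.inl i))
    simpa [fromBlocks_mulVec, sumElim_dotProduct_sumElim] using this

private lemma isUnit_one_sub_YX' {n : ℕ} {X Y : Matrix (Fin n) (Fin n) ℝ}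
    (h : (fromBlocks X (1 : Matrix (Fin n) (Fin n) ℝ) 1 Y).PosDef) :
    IsUnit (1 - Y * X).det := by
  have hX : X.PosDef := blockPosDef_X' h
  have hXdet : IsUnit X.det := isUnit_iff_ne_zero.2 (ne_of_gt hX.det_pos)
  haveI : Invertible X := X.invertibleOfIsUnitDet hXdet
  have hdet := h.det_pos
  rw [det_fromBlocks₁₁] at hdet
  have hS : det (Y - 1 * ⅟X * 1) ≠ 0 := by
    intro hz
    rw [hz, mul_zero] at hdet
    exact lt_irrefl 0 hdet
  have hprod : (1 - Y * X) = -((Y - 1 * ⅟X * 1) * X) := by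
    rw [sub_mul, neg_sub]
    simp [invOf_mul_self]
  rw [hprod, det_neg, det_mul]
  exact isUnit_iff_ne_zero.2 (mul_ne_zero (pow_ne_zero _ (by norm_num)) (mul_ne_zero hS (ne_of_gt hX.det_pos)))

/-- For `γ > 0`, the map `Ψ` is a continuous bijection from
`F_γ × GL_{n_x}(ℝ)` onto `G_γ`. -/
theorem Psi_continuous_bijection {nx nu ny nw nz : ℕ} (hnx : 0 < nx) (hnu : 0 < nu)
    (hny : 0 < ny) (hnw : 0 < nw) (hnz : 0 < nz) (P : Plant nx nu ny nw nz)
    (γ : ℝ) (hγ : 0 < γ) :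
    let GLset : Set (Matrix (Fin nx) (Fin nx) ℝ) := {T | IsUnit T.det}
    let S : Set (FTuple nx nu ny × Matrix (Fin nx) (Fin nx) ℝ) := (Fset P γ) ×ˢ GLset
    ContinuousOn (Psi (nx := nx) (nu := nu) (ny := ny)) S ∧
    Set.InjOn (Psi (nx := nx) (nu := nu) (ny := ny)) S ∧
    Psi '' S = Gset P γ := by
  intro GLset S
  refine ⟨?_, ?_, ?_⟩
  · intro p hp
    apply ContinuousAt.continuousWithinAt
    have h2 : ContinuousAt (fun q : FTuple nx nu ny × Matrix (Fin nx) (Fin nx) ℝ => q.2⁻¹) p := by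
      have hinv : ContinuousAt (fun M : Matrix (Fin nx) (Fin nx) ℝ => M⁻¹) p.2 := by
        apply continuousAt_matrix_inv
        rw [Ring.inverse_eq_inv']
        exact continuousAt_inv₀ (isUnit_iff_ne_zero.1 hp.2)
      exact hinv.comp continuous_snd.continuousAt
    have h1 : ContinuousAt (fun q : FTuple nx nu ny × Matrix (Fin nx) (Fin nx) ℝ =>
        (1 : Matrix (Fin nx) (Fin nx) ℝ) - q.1.2.1 * q.1.1) p :=
      (continuous_const.sub ((continuous_fst.snd.fst).mul continuous_fst.fst)).continuousAt
    exact continuous_fst.continuousAt.prodMk (continuous_snd.continuousAt.prodMk (h1.mul h2))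
  · intro p _ q _ h
    have h1 : p.1 = q.1 := congrArg (fun z : GTuple nx nu ny => z.1) h
    have h2 : p.2 = q.2 := congrArg (fun z : GTuple nx nu ny => z.2.1) h
    exact Prod.ext h1 h2
  · ext Z
    constructor
    · rintro ⟨p, hp, rfl⟩
      refine ⟨hp.1, ?_⟩
      show (1 - p.1.2.1 * p.1.1) * p.2⁻¹ * p.2 = 1 - p.1.2.1 * p.1.1
      rw [mul_assoc, Matrix.nonsing_inv_mul _ hp.2, mul_one]
    · intro hZ
      obtain ⟨hF, hΞ⟩ := hZ
      have hunit : IsUnit (1 - Z.1.2.1 * Z.1.1).det := isUnit_one_sub_YX' hF.2.2.1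
      have hPi : IsUnit Z.2.1.det := by
        have hm : IsUnit (Z.2.2 * Z.2.1).det := by rw [hΞ]; exact hunit
        rw [det_mul] at hm
        exact isUnit_of_mul_isUnit_right hm
      refine ⟨(Z.1, Z.2.1), ⟨hF, hPi⟩, ?_⟩
      show (Z.1, Z.2.1, (1 - Z.1.2.1 * Z.1.1) * Z.2.1⁻¹) = Z
      have hxi : (1 - Z.1.2.1 * Z.1.1) * Z.2.1⁻¹ = Z.2.2 := by
        rw [← hΞ, mul_assoc, Matrix.mul_nonsing_inv _ hPi, mul_one]
      rw [hxi]
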